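/- For every k ≥ 2 and n ≥ 1, the word w = w_{(k,n)} over the alphabet Σ_n = {1,…,n}, defined inductively by w_{(k,1)} = 1^{k−1} and w_{(k,n)} = (w_{(k,n−1)} n)^{k−1} w_{(k,n−1)}, satisfies maxscore_{2^{Σ_n}}(w) < k. -/

import Mathlib

/- Common definitions for finite-time Muller games, following
   McNaughton / Fearnley-Zimmermann. -/

universe u

variable {V : Type u}

/-- The occurrence set of a finite word: the set of letters occurring in it. -/
def occ (x : List V) : Set V := {v | v ∈ x}

/-- `score F w` is the maximal `k` such that some suffix of `w` decomposes as
`x₁ ⋯ x_k` with every `xᵢ` non-empty and `occ xᵢ = F` (with `max ∅ = 0`). -/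
noncomputable def score (F : Set V) (w : List V) : ℕ :=
  sSup {k | ∃ xs : List (List V), xs.length = k ∧
    (∀ x ∈ xs, x ≠ [] ∧ occ x = F) ∧ xs.flatten <:+ w}

/-- `maxscore 𝓕 w` is the maximum of `score F u` over `F ∈ 𝓕` and non-empty
prefixes `u` of `w`. -/
noncomputable def maxscore (𝓕 : Set (Set V)) (w : List V) : ℕ :=
  sSup {n | ∃ F ∈ 𝓕, ∃ u : List V, u ≠ [] ∧ u <+: w ∧ n = score F u}

/-- `AccGood F w x` : `x` is a suffix of `w` with `occ x ⊆ F` such that removing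
any suffix `y` of `x` from `w` does not change the score of `F`. -/
def AccGood (F : Set V) (w x : List V) : Prop :=
  x <:+ w ∧ occ x ⊆ F ∧
    ∀ y : List V, y <:+ x → score F (w.take (w.length - y.length)) = score F w

/-- The accumulator `acc F w` : the occurrence set of the longest suffix `x` of `w`
with `occ x ⊆ F` such that the score of `F` did not change during `x`. -/
noncomputable def acc (F : Set V) (w : List V) : Set V :=
  occ (w.drop (sInf {i | AccGood F w (w.drop i)}))

/-- A non-empty word `w` is an `𝓕`-burden if `maxscore 𝓕 w ≤ 2` and for every
`F ∈ 𝓕` either `score F w = 0`, or `score F w = 1` and `acc F w = ∅`. -/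
def Burden (𝓕 : Set (Set V)) (w : List V) : Prop :=
  w ≠ [] ∧ maxscore 𝓕 w ≤ 2 ∧
    ∀ F ∈ 𝓕, score F w = 0 ∨ (score F w = 1 ∧ acc F w = ∅)

/-- The maxscore of an infinite sequence: the supremum (in `ℕ∞`) of the scores of
sets `F ∈ 𝓕` over all non-empty finite prefixes. -/
noncomputable def maxscoreInf (𝓕 : Set (Set V)) (ρ : ℕ → V) : ℕ∞ :=
  ⨆ F ∈ 𝓕, ⨆ n : ℕ, (score F ((List.range (n + 1)).map ρ) : ℕ∞)

/-- The set of elements occurring infinitely often in the sequence `ρ`. -/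
def limitSet (ρ : ℕ → V) : Set V := {v | ∀ N : ℕ, ∃ n, N ≤ n ∧ ρ n = v}

/-- The indicator of a play: the union of all `F ∈ 𝓕` with positive score
together with all non-empty accumulators of members of `𝓕`. -/
noncomputable def ind (𝓕 : Set (Set V)) (w : List V) : Set V :=
  (⋃ F ∈ {F ∈ 𝓕 | 0 < score F w}, F) ∪ ⋃ F ∈ {F ∈ 𝓕 | acc F w ≠ ∅}, acc F w

/-- An arena: a finite directed graph together with the set `V0` of vertices of
Player 0 (Player 1 owns the complement), where every vertex has a successor. -/
structure Arena (V : Type u) where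
  V0 : Set V
  E : V → V → Prop
  exists_succ : ∀ v, ∃ u, E v u

/-- The positions of Player `i`. -/
def Arena.pos (G : Arena V) (i : Fin 2) : Set V :=
  if i = 0 then G.V0 else G.V0ᶜ

/-- A strategy maps a history (the play so far, excluding the current vertex)
and the current vertex to a successor vertex. -/
abbrev Strategy (V : Type u) := List V → V → V

/-- A strategy is legal if it always moves along edges. -/
def Arena.Legal (G : Arena V) (σ : Strategy V) : Prop :=
  ∀ w v, G.E v (σ w v)

/-- An infinite play in `G` starting in `v`. -/
def Arena.IsPlay (G : Arena V) (v : V) (ρ : ℕ → V) : Prop :=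
  ρ 0 = v ∧ ∀ n, G.E (ρ n) (ρ (n + 1))

/-- An infinite play is consistent with the strategy `σ` of Player `i`. -/
def Arena.ConsistentInf (G : Arena V) (i : Fin 2) (σ : Strategy V) (ρ : ℕ → V) : Prop :=
  ∀ n, ρ n ∈ G.pos i → ρ (n + 1) = σ ((List.range n).map ρ) (ρ n)

/-- Player `i` (with winning condition `𝓕i`) wins the Muller game from `v`. -/
def Arena.MullerWinFrom (G : Arena V) (i : Fin 2) (𝓕i : Set (Set V)) (v : V) : Prop :=
  ∃ σ : Strategy V, G.Legal σ ∧
    ∀ ρ : ℕ → V, G.IsPlay v ρ → G.ConsistentInf i σ ρ → limitSet ρ ∈ 𝓕i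

/-- The winning region of Player `i` in the Muller game. -/
def Arena.MullerWinRegion (G : Arena V) (i : Fin 2) (𝓕i : Set (Set V)) : Set V :=
  {v | G.MullerWinFrom i 𝓕i v}

/-- A finite play is consistent with the strategy `σ` of Player `i`. -/
def Arena.ConsistentFin (G : Arena V) (i : Fin 2) (σ : Strategy V) (w : List V) : Prop :=
  ∀ (u : List V) (v x : V), u ++ [v, x] <+: w → v ∈ G.pos i → x = σ u v

/-- A play of the finite-time Muller game with threshold `k`: a finite path
whose maxscore (over all subsets) is exactly `k`, while the maxscore of
its proper prefixes is `< k`. -/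
def FTPlay (G : Arena V) (k : ℕ) (w : List V) : Prop :=
  w.Chain' G.E ∧ maxscore (Set.univ : Set (Set V)) w = k ∧
    maxscore (Set.univ : Set (Set V)) w.dropLast < k

/-- Player `i` wins the finite-time Muller game with threshold `k` from `v`. -/
def FTWinFrom (G : Arena V) (i : Fin 2) (𝓕i : Set (Set V)) (k : ℕ) (v : V) : Prop :=
  ∃ σ : Strategy V, G.Legal σ ∧
    ∀ w : List V, FTPlay G k w → w.head? = some v → G.ConsistentFin i σ w →
      ∃ F ∈ 𝓕i, score F w = k

/-- The winning region of Player `i` in the finite-time Muller game. -/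
def FTWinRegion (G : Arena V) (i : Fin 2) (𝓕i : Set (Set V)) (k : ℕ) : Set V :=
  {v | FTWinFrom G i 𝓕i k v}

/-- A play of McNaughton's finite-time Muller game: a finite path such that some
set `F` reaches score `|F|! + 1`, while no set did so in a proper prefix. -/
def McNPlay (G : Arena V) (w : List V) : Prop :=
  w.Chain' G.E ∧ (∃ F : Set V, score F w = F.ncard.factorial + 1) ∧
    ∀ u : List V, u <+: w → u ≠ w →
      ∀ F : Set V, score F u ≠ F.ncard.factorial + 1

/-- Player `i` wins McNaughton's finite-time Muller game from `v`. -/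
def McNWinFrom (G : Arena V) (i : Fin 2) (𝓕i : Set (Set V)) (v : V) : Prop :=
  ∃ σ : Strategy V, G.Legal σ ∧
    ∀ w : List V, McNPlay G w → w.head? = some v → G.ConsistentFin i σ w →
      ∃ F ∈ 𝓕i, score F w = F.ncard.factorial + 1

/-- The winning region of Player `i` in McNaughton's finite-time Muller game. -/
def McNWinRegion (G : Arena V) (i : Fin 2) (𝓕i : Set (Set V)) : Set V :=
  {v | McNWinFrom G i 𝓕i v}

open Classical in
/-- The list `ρ₀ ⋯ ρₙ` of the first `n+1` vertices of the unique play that starts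
in `v` and is consistent with the strategy `σ` of Player `i` and the strategy `τ`
of the other player. -/
noncomputable def playList (G : Arena V) (i : Fin 2) (σ τ : Strategy V) (v : V) :
    ℕ → List V
  | 0 => [v]
  | n + 1 =>
      let w := playList G i σ τ v n
      let u := w.getLastD v
      w ++ [if u ∈ G.pos i then σ w.dropLast u else τ w.dropLast u]

/-- `playOf G i σ τ v` : the unique play starting in `v` that is consistent with
the strategy `σ` of Player `i` and the strategy `τ` of the other player. -/
noncomputable def playOf (G : Arena V) (i : Fin 2) (σ τ : Strategy V) (v : V)
    (n : ℕ) : V :=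
  (playList G i σ τ v n).getLastD v

/-- The word `w_{(k,n)}` over `Σ_n = {1, …, n}`, defined by
`w_{(k,1)} = 1^{k-1}` and `w_{(k,n)} = (w_{(k,n-1)} n)^{k-1} w_{(k,n-1)}`. -/
def wkn (k : ℕ) : ℕ → List ℕ
  | 0 => []
  | 1 => List.replicate (k - 1) 1
  | n + 2 => (List.replicate (k - 1) (wkn k (n + 1) ++ [n + 2])).flatten ++ wkn k (n + 1)

lemma mem_wkn_le (k : ℕ) : ∀ n, ∀ a ∈ wkn k n, a ≤ n := by
  intro n
  induction n using Nat.strong_induction_on with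
  | _ n ih =>
    match n with
    | 0 => simp [wkn]
    | 1 =>
      intro a ha
      rw [wkn] at ha
      exact (List.eq_of_mem_replicate ha).le
    | n + 2 =>
      intro a ha
      rw [wkn] at ha
      rcases List.mem_append.mp ha with h | h
      · rw [List.mem_flatten] at h
        obtain ⟨l, hl, hal⟩ := h
        have := List.eq_of_mem_replicate hl
        subst this
        rcases List.mem_append.mp hal with h' | h'
        · exact (ih (n + 1) (by omega) a h').trans (by omega)
        · simp at h'; omega
      · exact (ih (n + 1) (by omega) a h).trans (by omega)

lemma length_le_count' {α : Type*} [DecidableEq α] (c : α) :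
    ∀ xs : List (List α), (∀ x ∈ xs, c ∈ x) → xs.length ≤ xs.flatten.count c
  | [], _ => by simp
  | x :: xs, h => by
    simp only [List.flatten_cons, List.count_append, List.length_cons]
    have h1 : 0 < x.count c := List.count_pos_iff.mpr (h x (List.mem_cons_self))
    have h2 := length_le_count' c xs (fun y hy => h y (List.mem_cons_of_mem _ hy))
    omega

lemma infix_split {α : Type*} {l a b : List α} {c : α}
    (h : l <:+: a ++ c :: b) (hc : c ∉ l) : l <:+: a ∨ l <:+: b := by
  obtain ⟨s, t, h⟩ := h
  rw [List.append_assoc] at h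
  rcases List.append_eq_append_iff.mp h with ⟨a', ha, h2⟩ | ⟨c', hs, h2⟩
  · rcases List.append_eq_append_iff.mp h2 with ⟨x, hx, _⟩ | ⟨y, hy, hcb⟩
    · left; exact ⟨s, x, by rw [ha, hx, List.append_assoc]⟩
    · match y, hcb with
      | [], _ =>
        left
        simp only [List.append_nil] at hy
        subst hy
        exact ⟨s, [], by simp [ha]⟩
      | d :: y', hcb =>
        exfalso
        have hd : d = c := by injection hcb with h1 _; exact h1.symm
        exact hc (hy ▸ List.mem_append_right _ (hd ▸ List.mem_cons_self))
  · match c', h2 with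
    | [], h2 =>
      match l, h2 with
      | [], _ => right; exact ⟨[], b, by simp⟩
      | d :: l', h2 =>
        exfalso
        have hd : d = c := by injection h2 with h1 _; exact h1.symm
        exact hc (hd ▸ List.mem_cons_self)
    | d :: c'', h2 =>
      right
      refine ⟨c'', t, ?_⟩
      injection h2 with _ h3
      rw [h3]
      exact (List.append_assoc _ _ _)

lemma infix_rep {α : Type*} {w' l : List α} {c : α} (hc : c ∉ l) :
    ∀ j, l <:+: (List.replicate j (w' ++ [c])).flatten ++ w' → l <:+: w' := by
  intro j
  induction j with
  | zero => simp
  | succ j ih =>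
    intro h
    have h' : l <:+: w' ++ c :: ((List.replicate j (w' ++ [c])).flatten ++ w') := by
      rw [List.replicate_succ, List.flatten_cons] at h
      simpa [List.append_assoc] using h
    rcases infix_split h' hc with h1 | h1
    · exact h1
    · exact ih h1

lemma count_rep {w' : List ℕ} {c : ℕ} (hc : c ∉ w') :
    ∀ j, ((List.replicate j (w' ++ [c])).flatten ++ w').count c = j := by
  intro j
  induction j with
  | zero => simp [List.count_eq_zero.mpr hc]
  | succ j ih =>
    rw [List.replicate_succ, List.flatten_cons, List.append_assoc, List.count_append,
      List.count_append, ih, List.count_eq_zero.mpr hc]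
    simp [Nat.add_comm]

lemma key_bound (k : ℕ) (n : ℕ) (hn : 1 ≤ n) : ∀ F : Set ℕ, F ⊆ Set.Icc 1 n →
    ∀ xs : List (List ℕ), (∀ x ∈ xs, x ≠ [] ∧ occ x = F) →
    xs.flatten <:+: wkn k n → xs.length ≤ k - 1 := by
  induction n, hn using Nat.le_induction with
  | base =>
    intro F hF xs hxs hinf
    by_cases h1 : (1 : ℕ) ∈ F
    · have hmem : ∀ x ∈ xs, 1 ∈ x := by
        intro x hx
        have : (1 : ℕ) ∈ occ x := (hxs x hx).2 ▸ h1
        exact this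
      calc xs.length ≤ xs.flatten.count 1 := length_le_count' _ _ hmem
        _ ≤ (wkn k 1).count 1 := hinf.sublist.count_le _
        _ = k - 1 := by rw [wkn]; simp
    · match xs, hxs with
      | [], _ => simp
      | x :: xs, hxs =>
        exfalso
        obtain ⟨hne, hocc⟩ := hxs x (List.mem_cons_self)
        obtain ⟨a, ha⟩ := List.exists_mem_of_ne_nil x hne
        have haF : a ∈ F := hocc ▸ (show a ∈ occ x from ha)
        have := hF haF
        rw [Set.mem_Icc] at this
        have : a = 1 := by omega
        exact h1 (this ▸ haF)
  | succ n hn ih =>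
    intro F hF xs hxs hinf
    obtain ⟨m, rfl⟩ : ∃ m, n = m + 1 := ⟨n - 1, by omega⟩
    rw [wkn] at hinf
    by_cases hc : (m + 2 : ℕ) ∈ F
    · have hmem : ∀ x ∈ xs, m + 2 ∈ x := by
        intro x hx
        have : (m + 2 : ℕ) ∈ occ x := (hxs x hx).2 ▸ hc
        exact this
      have hcw' : (m + 2 : ℕ) ∉ wkn k (m + 1) := by
        intro h
        have := mem_wkn_le k (m + 1) _ h
        omega
      calc xs.length ≤ xs.flatten.count (m + 2) := length_le_count' _ _ hmem
        _ ≤ ((List.replicate (k - 1) (wkn k (m + 1) ++ [m + 2])).flatten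
              ++ wkn k (m + 1)).count (m + 2) := hinf.sublist.count_le _
        _ = k - 1 := count_rep hcw' (k - 1)
    · have hF' : F ⊆ Set.Icc 1 (m + 1) := by
        intro a ha
        have h1 := hF ha
        rw [Set.mem_Icc] at *
        have : a ≠ m + 2 := fun e => hc (e ▸ ha)
        omega
      have hnotmem : (m + 2 : ℕ) ∉ xs.flatten := by
        intro h
        rw [List.mem_flatten] at h
        obtain ⟨x, hx, hax⟩ := h
        exact hc ((hxs x hx).2 ▸ (show (m + 2 : ℕ) ∈ occ x from hax))
      exact ih F hF' xs hxs (infix_rep hnotmem (k - 1) hinf)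

/-- For every `k ≥ 2` and `n ≥ 1`, the word `w = w_{(k,n)}`
over `Σ_n = {1, …, n}` satisfies `maxscore_{2^{Σ_n}}(w) < k`. -/
theorem stmt_3 (k n : ℕ) (hk : 2 ≤ k) (hn : 1 ≤ n) :
    maxscore {F : Set ℕ | F ⊆ Set.Icc 1 n} (wkn k n) < k := by
  refine lt_of_le_of_lt (csSup_le' ?_) (show k - 1 < k by omega)
  rintro s ⟨F, hF, u, hu, hpre, rfl⟩
  apply csSup_le'
  rintro m ⟨xs, rfl, hxs, hsuf⟩
  exact key_bound k n hn F hF xs hxs (hsuf.isInfix.trans hpre.isInfix)
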